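/- Let K be a locally small (possibly large) category and C a small category. A functor S : K → [C, Set] into the functor category is small (i.e., it is the left Kan extension of its restriction to some small full subcategory of K) if and only if it is pointwise small, meaning that for every object c of C the composite ev_c ∘ S : K → Set of S with the evaluation functor at c is a small functor. -/

import Mathlib

open CategoryTheory CategoryTheory.Limits Opposite

universe w v v' u u'

/-- A functor `S : K ⥤ M` is (`w`-)small if it is the left Kan extension of its
restriction to some small full subcategory of `K`. -/
def IsSmallFunctor {K : Type u} [Category.{v} K] {M : Type u'} [Category.{v'} M]
    (S : K ⥤ M) : Prop :=
  ∃ P : K → Prop, Small.{w} (Subtype P) ∧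
    S.IsLeftKanExtension (𝟙 (ObjectProperty.ι P ⋙ S))

/-- Representable presheaves are small. -/
theorem isSmallFunctor_yoneda_obj {K : Type u} [Category.{v} K] (A : K) :
    IsSmallFunctor.{w} (yoneda.obj A) := by
  refine ⟨fun X => X = op A, ?_, ?_⟩
  · have : Subsingleton {X : Kᵒᵖ // X = op A} :=
      ⟨fun X Y => Subtype.ext (X.2.trans Y.2.symm)⟩
    infer_instance
  · set P : Kᵒᵖ → Prop := fun X => X = op A with hP
    set ι := ObjectProperty.ι P with hι
    constructor
    refine ⟨IsInitial.ofUniqueHom (fun E => StructuredArrow.homMk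
      (yonedaEquiv.symm (E.hom.app ⟨op A, rfl⟩ (𝟙 A))) ?_) ?_⟩
    · ext X f
      have hnat := ConcreteCategory.congr_hom (E.hom.naturality
        (show (⟨op A, rfl⟩ : ObjectProperty.FullSubcategory P) ⟶ X from ObjectProperty.homMk f.op)) (𝟙 A)
      simp [ι] at hnat
      refine Eq.trans ?_ hnat.symm
      rfl
    · intro E m
      apply StructuredArrow.hom_ext
      ext Y g
      have hx := ConcreteCategory.congr_hom (NatTrans.congr_app m.w ⟨op A, rfl⟩) (𝟙 A)
      have hnat := NatTrans.naturality_apply m.right (Quiver.Hom.op g : op A ⟶ Y) (𝟙 A)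
      have hx' : m.right.app (op A) (𝟙 A) = E.hom.app ⟨op A, rfl⟩ (𝟙 A) := by
        rw [← hx]; rfl
      show m.right.app Y g = E.right.map g.op (E.hom.app ⟨op A, rfl⟩ (𝟙 A))
      rw [← hx', ← hnat]
      congr 1
      exact (Category.comp_id g).symm

/-- The category of small presheaves on `K`. -/
abbrev SmallPresheaf (K : Type u) [Category.{v} K] : Type (max u (v + 1)) :=
  ObjectProperty.FullSubcategory (fun F : Kᵒᵖ ⥤ Type v => IsSmallFunctor.{v} F)

/-- The Yoneda embedding of `K` into its category of small presheaves. -/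
def smallYoneda (K : Type u) [Category.{v} K] : K ⥤ SmallPresheaf K where
  obj A := ⟨yoneda.obj A, isSmallFunctor_yoneda_obj A⟩
  map f := ObjectProperty.homMk (yoneda.map f)

/-- `L` is a limit of `S : C ⥤ A` weighted by `φ : C ⥤ Type v`, i.e. morphisms `a ⟶ L`
correspond, naturally in `a`, to natural transformations `φ ⟶ A(a, S-)`. -/
def IsWeightedLimit {C : Type u} [Category.{v} C] {A : Type u'} [Category.{v'} A]
    (φ : C ⥤ Type v) (S : C ⥤ A) (L : A) : Prop :=
  ∃ e : ∀ a : A, (a ⟶ L) ≃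
      ((φ ⋙ uliftFunctor.{v'}) ⟶ (S ⋙ coyoneda.obj (op a) ⋙ uliftFunctor.{v})),
    ∀ (a a' : A) (f : a' ⟶ a) (g : a ⟶ L) (c : C) (x : φ.obj c),
      (e a' (f ≫ g)).app c ⟨x⟩ = ⟨f ≫ ((e a g).app c ⟨x⟩).down⟩

/-- `L` is a colimit of `T : Cᵒᵖ ⥤ A` weighted by `φ : C ⥤ Type v`, i.e. morphisms `L ⟶ a`
correspond, naturally in `a`, to natural transformations `φ ⟶ A(T-, a)`. -/
def IsWeightedColimit {C : Type u} [Category.{v} C] {A : Type u'} [Category.{v'} A]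
    (φ : C ⥤ Type v) (T : Cᵒᵖ ⥤ A) (L : A) : Prop :=
  ∃ e : ∀ a : A, (L ⟶ a) ≃
      ((φ ⋙ uliftFunctor.{v'}) ⟶ (T.rightOp ⋙ yoneda.obj a ⋙ uliftFunctor.{v})),
    ∀ (a a' : A) (f : a ⟶ a') (g : L ⟶ a) (c : C) (x : φ.obj c),
      (e a' (g ≫ f)).app c ⟨x⟩ = ⟨((e a g).app c ⟨x⟩).down ≫ f⟩

/-- A class of weights with small domains. -/
def WeightClass : Type (v + 1) :=
  ∀ C : Cat.{v, v}, (C ⥤ Type v) → Prop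

/-- A category is `Φ`-complete if it has all `φ`-weighted limits for `φ ∈ Φ`. -/
def PhiComplete (Φ : WeightClass.{v}) (A : Type u) [Category.{v'} A] : Prop :=
  ∀ (C : Cat.{v, v}) (φ : C ⥤ Type v), Φ C φ →
    ∀ S : C ⥤ A, ∃ L : A, IsWeightedLimit φ S L

/-- A category is `Φ`-cocomplete if it has all `φ`-weighted colimits for `φ ∈ Φ`. -/
def PhiCocomplete (Φ : WeightClass.{v}) (A : Type u) [Category.{v'} A] : Prop :=
  ∀ (C : Cat.{v, v}) (φ : C ⥤ Type v), Φ C φ →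
    ∀ T : Cᵒᵖ ⥤ A, ∃ L : A, IsWeightedColimit φ T L

/-- A functor is `Φ`-continuous if it preserves all `φ`-weighted limits for `φ ∈ Φ`. -/
def PhiContinuous (Φ : WeightClass.{v}) {A : Type u} [Category.{v'} A]
    {B : Type u'} [Category.{w} B] (F : A ⥤ B) : Prop :=
  ∀ (C : Cat.{v, v}) (φ : C ⥤ Type v), Φ C φ →
    ∀ (S : C ⥤ A) (L : A), IsWeightedLimit φ S L → IsWeightedLimit φ (S ⋙ F) (F.obj L)

/-- The closure of a collection `P` of objects of `A` under `Φ`-weighted colimits. -/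
inductive PhiClosure (Φ : WeightClass.{v}) {A : Type u} [Category.{v'} A]
    (P : A → Prop) : A → Prop
  | base {X : A} (hX : P X) : PhiClosure Φ P X
  | colim {C : Cat.{v, v}} (φ : C ⥤ Type v) (hφ : Φ C φ) (T : Cᵒᵖ ⥤ A)
      (hT : ∀ c : Cᵒᵖ, PhiClosure Φ P (T.obj c)) {L : A}
      (hL : IsWeightedColimit φ T L) : PhiClosure Φ P L

/-- The smallness condition on a class of weights: for every small `C`, the closure of the
representables in the presheaf category of `C` under `Φ`-weighted colimits is small. -/
def SmallnessCondition (Φ : WeightClass.{v}) : Prop :=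
  ∀ C : Cat.{v, v}, EssentiallySmall.{v} (ObjectProperty.FullSubcategory (PhiClosure Φ
    (fun F : Cᵒᵖ ⥤ Type v => ∃ c : C, Nonempty (F ≅ yoneda.obj c))))

/-- The soundness condition on a class of weights: for every small `Φ`-complete `D` and every
`Φ`-continuous `ψ : D ⥤ Type v`, the weighted-colimit functor `ψ * (-) : [Dᵒᵖ, Type v] ⥤ Type v`
(i.e. the small-colimit-preserving extension of `ψ` along the Yoneda embedding) is
`Φ`-continuous. -/
def SoundnessCondition (Φ : WeightClass.{v}) : Prop :=
  ∀ D : Cat.{v, v}, PhiComplete Φ D → ∀ ψ : D ⥤ Type v, PhiContinuous Φ ψ →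
    ∀ T : (Dᵒᵖ ⥤ Type v) ⥤ Type v, PreservesColimitsOfSize.{v, v} T →
      Nonempty ((yoneda : D ⥤ _) ⋙ T ≅ ψ) → PhiContinuous Φ T

/-- `φ` belongs to the saturation of `Φ` if it lies in the closure of the representables
under `Φ`-weighted colimits in the presheaf category over its domain. -/
def InSaturation (Φ : WeightClass.{v}) (C : Cat.{v, v}) (φ : C ⥤ Type v) : Prop :=
  PhiClosure Φ (fun F : C ⥤ Type v => ∃ c : Cᵒᵖ, Nonempty (F ≅ coyoneda.obj c)) φ

/-- A category `J` is `α`-filtered when every diagram with fewer than `α` arrows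
admits a cocone. -/
def IsCardinalFiltered (J : Type u) [Category.{v'} J] (α : Cardinal.{v}) : Prop :=
  ∀ D : Cat.{v, v}, Cardinal.mk (Arrow D) < α → ∀ F : D ⥤ J, Nonempty (Cocone F)

/-- An object `X` is `α`-presentable when its hom-functor preserves `α`-filtered colimits. -/
def IsPresentableObj {K : Type u} [Category.{v} K] (α : Cardinal.{v}) (X : K) : Prop :=
  ∀ J : Cat.{v, v}, IsCardinalFiltered J α →
    PreservesColimitsOfShape J (coyoneda.obj (op X))

/-- `K` is locally `α`-presentable: it is cocomplete and has a small full subcategory of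
`α`-presentable objects such that every object is an `α`-filtered colimit of objects
from it. -/
def IsLocallyPresentableAt (K : Type u) [Category.{v} K] (α : Cardinal.{v}) : Prop :=
  HasColimitsOfSize.{v, v} K ∧ α.IsRegular ∧
    ∃ P : K → Prop, Small.{v} (Subtype P) ∧ (∀ X, P X → IsPresentableObj α X) ∧
      ∀ X : K, ∃ J : Cat.{v, v}, IsCardinalFiltered J α ∧
        ∃ (F : J ⥤ K) (c : Cocone F),
          (∀ j, P (F.obj j)) ∧ c.pt = X ∧ Nonempty (IsColimit c)

/-- `K` is locally presentable. -/
def IsLocallyPresentable (K : Type u) [Category.{v} K] : Prop :=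
  ∃ α : Cardinal.{v}, IsLocallyPresentableAt K α

/-- `PF : PK ⥤ PL` is the (essentially unique) functor sending a small presheaf `X` to the
left Kan extension of `X` along `Fᵒᵖ`. -/
def IsPshExtensionOf {K : Type u} {L : Type u'} [Category.{v} K] [Category.{v} L]
    (F : K ⥤ L) (PF : SmallPresheaf K ⥤ SmallPresheaf L) : Prop :=
  ∃ ε : ObjectProperty.ι (fun X : Kᵒᵖ ⥤ Type v => IsSmallFunctor.{v} X) ⟶
      PF ⋙ ObjectProperty.ι (fun X : Lᵒᵖ ⥤ Type v => IsSmallFunctor.{v} X) ⋙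
        (Functor.whiskeringLeft Kᵒᵖ Lᵒᵖ (Type v)).obj F.op,
    ∀ X : SmallPresheaf K, Functor.IsLeftKanExtension ((PF.obj X).obj) (ε.app X)

open MonoidalCategory in
/-- `D` is the Day convolution `∫^{A,B} K(-, A ⊗ B) × F A × G B` of the presheaves
`F` and `G`: it carries a universal wedge. -/
def IsDayConvolution {K : Type u} [Category.{v} K] [MonoidalCategory K]
    (F G D : Kᵒᵖ ⥤ Type v) : Prop :=
  ∃ u : ∀ A B : K, F.obj (op A) → G.obj (op B) → D.obj (op (A ⊗ B)),
    (∀ (A A' B B' : K) (f : A' ⟶ A) (g : B' ⟶ B) (x : F.obj (op A)) (y : G.obj (op B)),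
      u A' B' (F.map f.op x) (G.map g.op y)
        = D.map (MonoidalCategory.tensorHom f g).op (u A B x y)) ∧
    ∀ (H : Kᵒᵖ ⥤ Type v)
      (p : ∀ A B : K, F.obj (op A) → G.obj (op B) → H.obj (op (A ⊗ B))),
      (∀ (A A' B B' : K) (f : A' ⟶ A) (g : B' ⟶ B) (x : F.obj (op A)) (y : G.obj (op B)),
        p A' B' (F.map f.op x) (G.map g.op y)
          = H.map (MonoidalCategory.tensorHom f g).op (p A B x y)) →
      ∃! τ : D ⟶ H, ∀ (A B : K) (x : F.obj (op A)) (y : G.obj (op B)),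
        τ.app (op (A ⊗ B)) (u A B x y) = p A B x y

/-- The restricted Yoneda embedding of `M` into presheaves on the full subcategory of
`β`-presentable objects. -/
def restrictedYoneda (M : Type u) [Category.{v} M] (β : Cardinal.{v}) :
    M ⥤ ((ObjectProperty.FullSubcategory (IsPresentableObj β : M → Prop))ᵒᵖ ⥤ Type v) :=
  yoneda ⋙ (Functor.whiskeringLeft _ _ _).obj (ObjectProperty.ι _).op


section Aux0

open CategoryTheory.Functor

variable {A₀ : Type*} [Category A₀] {B₀ : Type*} [Category B₀]
  {D₀ : Type*} [Category D₀] {H₀ : Type*} [Category H₀]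

/-- Transitivity of left Kan extensions. -/
lemma aux_isLeftKanExtension_trans (j : A₀ ⥤ B₀) (ι : B₀ ⥤ D₀)
    {F : A₀ ⥤ H₀} {F' : B₀ ⥤ H₀} {F'' : D₀ ⥤ H₀}
    (β : F ⟶ j ⋙ F') (η : F' ⟶ ι ⋙ F'')
    [F'.IsLeftKanExtension β] [F''.IsLeftKanExtension η] :
    F''.IsLeftKanExtension ((β ≫ whiskerLeft j η : F ⟶ (j ⋙ ι) ⋙ F'')) := by
  constructor
  refine ⟨IsInitial.ofUniqueHom (fun G => StructuredArrow.homMk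
    (F''.descOfIsLeftKanExtension η G.right
      (F'.descOfIsLeftKanExtension β (ι ⋙ G.right) G.hom)) ?_) ?_⟩
  · ext X
    have h1 := F''.descOfIsLeftKanExtension_fac_app η G.right
      (F'.descOfIsLeftKanExtension β (ι ⋙ G.right) G.hom) (j.obj X)
    have h2 := F'.descOfIsLeftKanExtension_fac_app β (ι ⋙ G.right) G.hom X
    simp only [NatTrans.comp_app, whiskerLeft_app, Category.assoc, Functor.comp_obj,
      Functor.LeftExtension.mk_hom, StructuredArrow.mk_hom_eq_self,
      whiskeringLeft_obj_obj, whiskeringLeft_obj_map] at h1 h2 ⊢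
    show (β.app X ≫ η.app (j.obj X)) ≫ _ = _
    exact (Category.assoc _ _ _).trans ((congrArg (β.app X ≫ ·) h1).trans h2)
  · intro G m
    apply StructuredArrow.hom_ext
    have hw := StructuredArrow.w m
    apply F''.hom_ext_of_isLeftKanExtension η
    apply F'.hom_ext_of_isLeftKanExtension β
    ext X
    have hmw := NatTrans.congr_app hw X
    have h1 := F''.descOfIsLeftKanExtension_fac_app η G.right
      (F'.descOfIsLeftKanExtension β (ι ⋙ G.right) G.hom) (j.obj X)
    have h2 := F'.descOfIsLeftKanExtension_fac_app β (ι ⋙ G.right) G.hom X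
    simp only [NatTrans.comp_app, whiskerLeft_app, Category.assoc, Functor.comp_obj,
      whiskeringLeft_obj_obj, whiskeringLeft_obj_map, StructuredArrow.mk_hom_eq_self,
      Functor.LeftExtension.mk_hom, Functor.LeftExtension.mk_right,
      StructuredArrow.homMk_right] at h1 h2 hmw ⊢
    refine Eq.trans ?_ ((congrArg (β.app X ≫ ·) h1).trans h2).symm
    exact (Category.assoc _ _ _).symm.trans hmw
    try exact hmw

/-- Restricting a pointwise left Kan extension to an intermediate full subcategory. -/
lemma aux_isLeftKanExtension_restrict (j : A₀ ⥤ B₀) (ι : B₀ ⥤ D₀) [ι.Full] [ι.Faithful]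
    (F'' : D₀ ⥤ H₀) [F''.IsLeftKanExtension (𝟙 ((j ⋙ ι) ⋙ F''))]
    [Functor.HasPointwiseLeftKanExtension (j ⋙ ι) ((j ⋙ ι) ⋙ F'')] :
    (ι ⋙ F'').IsLeftKanExtension (𝟙 (j ⋙ ι ⋙ F'')) := by
  have hE := Functor.isPointwiseLeftKanExtensionOfIsLeftKanExtension F''
    (𝟙 ((j ⋙ ι) ⋙ F''))
  have hE' : (Functor.LeftExtension.mk (ι ⋙ F'')
      (𝟙 (j ⋙ ι ⋙ F''))).IsPointwiseLeftKanExtension := by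
    intro b
    have h2 := (hE (ι.obj b)).whiskerEquivalence (CostructuredArrow.post j ι b).asEquivalence
    exact h2.ofIsoColimit (Cocones.ext (Iso.refl _) (by
      intro g
      refine (Category.comp_id _).trans ?_
      refine (Category.id_comp _).trans ?_
      refine Eq.trans ?_ (Category.id_comp _).symm
      rfl))
  exact hE'.isLeftKanExtension

end Aux0

section Aux1

variable {K : Type u} [Category.{v} K]

lemma aux_small_costructuredArrow {P : K → Prop}
    (hP : Small.{v} (Subtype P)) (k : K) :
    Small.{v} (CostructuredArrow (ObjectProperty.ι P) k) := by
  haveI := hP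
  haveI : Small.{v} (Σ a : Subtype P, (a.1 ⟶ k)) := inferInstance
  refine small_of_surjective (f := fun x : Σ a : Subtype P, (a.1 ⟶ k) =>
    CostructuredArrow.mk (S := ObjectProperty.ι P) (T := k) (Y := ⟨x.1.1, x.1.2⟩)
      (show (ObjectProperty.ι P).obj ⟨x.1.1, x.1.2⟩ ⟶ k from x.2)) ?_
  intro g
  exact ⟨⟨⟨g.left.1, g.left.2⟩, g.hom⟩, (CostructuredArrow.eq_mk g).symm⟩

lemma aux_hasPointwise {P : K → Prop}
    (hP : Small.{v} (Subtype P)) {H : Type u'} [Category.{v'} H]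
    [HasColimitsOfSize.{v, v} H] (F : ObjectProperty.FullSubcategory P ⥤ H) :
    Functor.HasPointwiseLeftKanExtension (ObjectProperty.ι P) F := by
  intro k
  haveI : Small.{v} (CostructuredArrow (ObjectProperty.ι P) k) :=
    aux_small_costructuredArrow hP k
  haveI : EssentiallySmall.{v} (CostructuredArrow (ObjectProperty.ι P) k) :=
    essentiallySmall_of_small_of_locallySmall _
  haveI := hasColimitsOfShape_of_essentiallySmall
    (CostructuredArrow (ObjectProperty.ι P) k) H
  infer_instance

end Aux1

/-- A functor `S : K ⥤ [C, Set]` into a functor category (with `C` small)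
is small if and only if it is pointwise small, i.e. each composite with an evaluation
functor is small. -/
theorem statement0 {K : Type u} [Category.{v} K] {C : Type v} [SmallCategory C]
    (S : K ⥤ C ⥤ Type v) :
    IsSmallFunctor.{v} S ↔
      ∀ c : C, IsSmallFunctor.{v} (S ⋙ (evaluation C (Type v)).obj c) := by
  constructor
  · rintro ⟨P, hP, hS⟩ c
    refine ⟨P, hP, ?_⟩
    haveI := hS
    haveI : Functor.HasPointwiseLeftKanExtension (ObjectProperty.ι P)
        (ObjectProperty.ι P ⋙ S) := aux_hasPointwise hP _
    have hpt := Functor.isPointwiseLeftKanExtensionOfIsLeftKanExtension S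
      (𝟙 (ObjectProperty.ι P ⋙ S))
    have hptc : (Functor.LeftExtension.mk (S ⋙ (evaluation C (Type v)).obj c)
        (𝟙 (ObjectProperty.ι P ⋙ S ⋙
          (evaluation C (Type v)).obj c))).IsPointwiseLeftKanExtension := by
      intro k
      have h := isColimitOfPreserves ((evaluation C (Type v)).obj c) (hpt k)
      exact h.ofIsoColimit (Cocones.ext (Iso.refl _) (by intro g; aesop_cat))
    exact hptc.isLeftKanExtension
  · intro h
    choose Pc h1 h2 using h
    let P : K → Prop := fun X => ∃ c, Pc c X
    have hPsmall : Small.{v} (Subtype P) := by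
      haveI : ∀ c, Small.{v} (Subtype (Pc c)) := h1
      refine small_of_surjective (f := fun x : Σ c : C, Subtype (Pc c) =>
        (⟨x.2.1, ⟨x.1, x.2.2⟩⟩ : Subtype P)) ?_
      rintro ⟨X, c, hc⟩
      exact ⟨⟨c, X, hc⟩, rfl⟩
    refine ⟨P, hPsmall, ?_⟩
    set ι := ObjectProperty.ι P with hι
    have key : ∀ c : C, (S ⋙ (evaluation C (Type v)).obj c).IsLeftKanExtension
        (𝟙 (ι ⋙ (S ⋙ (evaluation C (Type v)).obj c))) := by
      intro c
      set F := S ⋙ (evaluation C (Type v)).obj c with hF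
      let j : ObjectProperty.FullSubcategory (Pc c) ⥤ ObjectProperty.FullSubcategory P :=
        ObjectProperty.ιOfLE (fun X hX => ⟨c, hX⟩)
      haveI hQkan : F.IsLeftKanExtension (𝟙 ((j ⋙ ι) ⋙ F)) := h2 c
      haveI hQpt : Functor.HasPointwiseLeftKanExtension (j ⋙ ι) ((j ⋙ ι) ⋙ F) :=
        aux_hasPointwise (h1 c) _
      haveI hB : (ι ⋙ F).IsLeftKanExtension (𝟙 (j ⋙ ι ⋙ F)) :=
        aux_isLeftKanExtension_restrict j ι F
      haveI hPpt : Functor.HasPointwiseLeftKanExtension ι (ι ⋙ F) :=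
        aux_hasPointwise hPsmall _
      set Lf := Functor.pointwiseLeftKanExtension ι (ι ⋙ F) with hLf
      set η := Functor.pointwiseLeftKanExtensionUnit ι (ι ⋙ F) with hη
      haveI : Lf.IsLeftKanExtension η := inferInstance
      haveI hA : Lf.IsLeftKanExtension
          (((𝟙 (j ⋙ ι ⋙ F)) ≫ Functor.whiskerLeft j η : (j ⋙ ι) ⋙ F ⟶ (j ⋙ ι) ⋙ Lf)) :=
        aux_isLeftKanExtension_trans j ι (𝟙 (j ⋙ ι ⋙ F)) η
      set φ : Lf ⟶ F := Lf.descOfIsLeftKanExtension η F (𝟙 (ι ⋙ F)) with hφ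
      have hcomm : η ≫ Functor.whiskerLeft ι φ = 𝟙 (ι ⋙ F) :=
        Lf.descOfIsLeftKanExtension_fac η F (𝟙 (ι ⋙ F))
      have hcomm2 : ((𝟙 (j ⋙ ι ⋙ F)) ≫ Functor.whiskerLeft j η) ≫ Functor.whiskerLeft (j ⋙ ι) φ
          = 𝟙 ((j ⋙ ι) ⋙ F) := by
        rw [Category.id_comp]
        show Functor.whiskerLeft j η ≫ Functor.whiskerLeft j (Functor.whiskerLeft ι φ) = _
        rw [← Functor.whiskerLeft_comp, hcomm]
        rfl
      have hiso : IsIso φ :=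
        (Functor.isLeftKanExtension_iff_isIso φ
          ((𝟙 (j ⋙ ι ⋙ F)) ≫ Functor.whiskerLeft j η) (𝟙 ((j ⋙ ι) ⋙ F)) hcomm2).mp hQkan
      exact (Functor.isLeftKanExtension_iff_isIso φ η (𝟙 (ι ⋙ F)) hcomm).mpr hiso
    have hre : (Functor.LeftExtension.mk S (𝟙 (ι ⋙ S))).IsPointwiseLeftKanExtension := by
      intro k
      apply evaluationJointlyReflectsColimits
      intro c
      haveI := key c
      haveI : Functor.HasPointwiseLeftKanExtension ι
          (ι ⋙ (S ⋙ (evaluation C (Type v)).obj c)) := aux_hasPointwise hPsmall _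
      have hptc := Functor.isPointwiseLeftKanExtensionOfIsLeftKanExtension
        (S ⋙ (evaluation C (Type v)).obj c)
        (𝟙 (ι ⋙ (S ⋙ (evaluation C (Type v)).obj c)))
      exact (hptc k).ofIsoColimit (Cocones.ext (Iso.refl _) (by intro g; aesop_cat))
    exact hre.isLeftKanExtension
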